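/- Let T > 0 and d_x, d_u, d_y ∈ ℕ. Let A, Q : [0,T] → ℝ^{d_x×d_x} (Q symmetric-valued), B : [0,T] → ℝ^{d_x×d_u}, R : [0,T] → ℝ^{d_u×d_u} with symmetric invertible values, σ : [0,T] → ℝ^{d_x×d_ω}, C : [0,T] → ℝ^{d_y×d_x}, γ : [0,T] → ℝ^{d_y×d_ν} with γγᵀ invertible, and S : [0,T] → ℝ^{d_x×d_x} symmetric-valued be given. Set G := BR⁻¹Bᵀ and L := SCᵀ(γγᵀ)⁻¹. Suppose Ψ, Φ : [0,T] → ℝ^{d_x×d_x} (symmetric-valued) and β : [0,T] → ℝ are differentiable and satisfy −dΨ/dt = Q + AᵀΨ + ΨA − ΨGΨ, −dΦ/dt = (A − LC)ᵀΦ + Φ(A − LC) + ΨGΨ, and −dβ/dt = tr((Ψ+Φ)σσᵀ) + tr(ΦSCᵀ(γγᵀ)⁻¹CS) on [0,T]. Define w(t,x,z) := xᵀΨ(t)x + (x−z)ᵀΦ(t)(x−z) + β(t), u*(t,z) := −R⁻¹BᵀΨz, v*(t,z) := (A − GΨ − LC)z, and κ*(t) := L(t). Then for every t ∈ [0,T]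 and every x, z ∈ ℝ^{d_x}: −∂w/∂t(t,x,z) = xᵀQx + u*ᵀRu* + (2Ψx + 2Φ(x−z))ᵀ(Ax + Bu*) + (−2Φ(x−z))ᵀ(v* + κ*Cx) + tr((Ψ+Φ)σσᵀ) + tr(Φκ*γγᵀκ*ᵀ). -/

import Mathlib

open Matrix Set


lemma dp2_aux {m n p : ℕ} (N : Matrix (Fin m) (Fin n) ℝ) (K : Matrix (Fin m) (Fin p) ℝ)
    (a : Fin n → ℝ) (b : Fin p → ℝ) : (N *ᵥ a) ⬝ᵥ (K *ᵥ b) = a ⬝ᵥ ((Nᵀ * K) *ᵥ b) := by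
  rw [dotProduct_mulVec, vecMul_mulVec, ← dotProduct_mulVec]

lemma dp_comm_aux {m n : ℕ} (N : Matrix (Fin m) (Fin n) ℝ) (a : Fin m → ℝ) (b : Fin n → ℝ) :
    a ⬝ᵥ (N *ᵥ b) = b ⬝ᵥ (Nᵀ *ᵥ a) := by
  rw [dotProduct_mulVec, dotProduct_comm, mulVec_transpose]

lemma quad_deriv_aux {d : ℕ} {t : ℝ} (x : Fin d → ℝ) {M : ℝ → Matrix (Fin d) (Fin d) ℝ}
    {M' : Matrix (Fin d) (Fin d) ℝ} (h : ∀ i j, HasDerivAt (fun τ => M τ i j) (M' i j) t) :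
    HasDerivAt (fun τ => x ⬝ᵥ (M τ *ᵥ x)) (x ⬝ᵥ (M' *ᵥ x)) t := by
  simp only [dotProduct, mulVec]
  exact HasDerivAt.fun_sum fun i _ =>
    (HasDerivAt.fun_sum fun j _ => (h i j).mul_const (x j)).const_mul (x i)


/-- Verification that the quadratic ansatz `w(t,x,z) = xᵀΨx + (x−z)ᵀΦ(x−z) + β` solves
the Hamilton–Jacobi–Bellman equation of the LQG problem of the conventional POSC
(treated via memory-limited POSC, memory dimension = state dimension) pointwise at the
controls `u* = −R⁻¹BᵀΨz`, `v* = (A − GΨ − LC)z`, `κ* = L`, given that `Ψ` solves the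
Riccati equation and `Φ`, `β` solve the stated linear ODEs. Here `S` plays the role of the
conditional covariance and `L = SCᵀ(γγᵀ)⁻¹` is the Kalman gain. -/
theorem stmt_10 {dx du dy dω dν : ℕ} (T : ℝ) (hT : 0 < T)
    (A : ℝ → Matrix (Fin dx) (Fin dx) ℝ)
    (Q : ℝ → Matrix (Fin dx) (Fin dx) ℝ) (hQsymm : ∀ t, (Q t).IsSymm)
    (B : ℝ → Matrix (Fin dx) (Fin du) ℝ)
    (R : ℝ → Matrix (Fin du) (Fin du) ℝ)
    (hRsymm : ∀ t, (R t).IsSymm) (hRinv : ∀ t, IsUnit (R t).det)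
    (σ : ℝ → Matrix (Fin dx) (Fin dω) ℝ)
    (C : ℝ → Matrix (Fin dy) (Fin dx) ℝ)
    (γ : ℝ → Matrix (Fin dy) (Fin dν) ℝ) (hγinv : ∀ t, IsUnit (γ t * (γ t)ᵀ).det)
    (S : ℝ → Matrix (Fin dx) (Fin dx) ℝ) (hSsymm : ∀ t, (S t).IsSymm)
    (G : ℝ → Matrix (Fin dx) (Fin dx) ℝ)
    (hG : ∀ t, G t = B t * (R t)⁻¹ * (B t)ᵀ)
    (L : ℝ → Matrix (Fin dx) (Fin dy) ℝ)
    (hL : ∀ t, L t = S t * (C t)ᵀ * (γ t * (γ t)ᵀ)⁻¹)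
    (Ψ Φ : ℝ → Matrix (Fin dx) (Fin dx) ℝ)
    (hΨsymm : ∀ t, (Ψ t).IsSymm) (hΦsymm : ∀ t, (Φ t).IsSymm)
    (β : ℝ → ℝ)
    (hΨ : ∀ t ∈ Icc (0 : ℝ) T, ∀ i j, HasDerivAt (fun τ => Ψ τ i j)
      ((-(Q t + (A t)ᵀ * Ψ t + Ψ t * A t - Ψ t * G t * Ψ t)) i j) t)
    (hΦ : ∀ t ∈ Icc (0 : ℝ) T, ∀ i j, HasDerivAt (fun τ => Φ τ i j)
      ((-((A t - L t * C t)ᵀ * Φ t + Φ t * (A t - L t * C t)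
        + Ψ t * G t * Ψ t)) i j) t)
    (hβ : ∀ t ∈ Icc (0 : ℝ) T, HasDerivAt β
      (-(((Ψ t + Φ t) * (σ t * (σ t)ᵀ)).trace
        + (Φ t * (S t * (C t)ᵀ * (γ t * (γ t)ᵀ)⁻¹ * C t * S t)).trace)) t) :
    ∀ t ∈ Icc (0 : ℝ) T, ∀ x z : Fin dx → ℝ, ∀ u : Fin du → ℝ, ∀ v : Fin dx → ℝ,
      ∀ κ : Matrix (Fin dx) (Fin dy) ℝ,
      u = -(((R t)⁻¹ * (B t)ᵀ * Ψ t) *ᵥ z) →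
      v = (A t - G t * Ψ t - L t * C t) *ᵥ z →
      κ = L t →
      HasDerivAt (fun τ => x ⬝ᵥ (Ψ τ *ᵥ x) + (x - z) ⬝ᵥ (Φ τ *ᵥ (x - z)) + β τ)
        (-(x ⬝ᵥ (Q t *ᵥ x) + u ⬝ᵥ (R t *ᵥ u)
          + ((2 : ℝ) • (Ψ t *ᵥ x) + (2 : ℝ) • (Φ t *ᵥ (x - z))) ⬝ᵥ (A t *ᵥ x + B t *ᵥ u)
          + (-((2 : ℝ) • (Φ t *ᵥ (x - z)))) ⬝ᵥ (v + (κ * C t) *ᵥ x)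
          + ((Ψ t + Φ t) * (σ t * (σ t)ᵀ)).trace
          + (Φ t * (κ * (γ t * (γ t)ᵀ) * κᵀ)).trace)) t := by
  intro t ht x z u v κ hu hv hκ
  have hD := ((quad_deriv_aux x (hΨ t ht)).fun_add (quad_deriv_aux (x - z) (hΦ t ht))).fun_add (hβ t ht)
  refine hD.congr_deriv ?_
  symm
  subst hu hv hκ
  -- basic symmetry facts
  have hRiT : ((R t)⁻¹)ᵀ = (R t)⁻¹ := by
    rw [Matrix.transpose_nonsing_inv, (hRsymm t).eq]
  have hW : (γ t * (γ t)ᵀ)ᵀ = γ t * (γ t)ᵀ := by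
    rw [Matrix.transpose_mul, Matrix.transpose_transpose]
  have hWiT : ((γ t * (γ t)ᵀ)⁻¹)ᵀ = (γ t * (γ t)ᵀ)⁻¹ := by
    rw [Matrix.transpose_nonsing_inv, hW]
  have hGT : (G t)ᵀ = G t := by
    rw [hG]; simp [Matrix.transpose_mul, hRiT, Matrix.mul_assoc]
  -- trace identity
  have hκtr : L t * (γ t * (γ t)ᵀ) * (L t)ᵀ
      = S t * (C t)ᵀ * (γ t * (γ t)ᵀ)⁻¹ * C t * S t := by
    rw [hL]
    rw [Matrix.transpose_mul, Matrix.transpose_mul, Matrix.transpose_transpose, hWiT,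
      (hSsymm t).eq]
    calc S t * (C t)ᵀ * (γ t * (γ t)ᵀ)⁻¹ * (γ t * (γ t)ᵀ) * ((γ t * (γ t)ᵀ)⁻¹ * (C t * S t))
        = S t * (C t)ᵀ * ((γ t * (γ t)ᵀ)⁻¹ * (γ t * (γ t)ᵀ) * (γ t * (γ t)ᵀ)⁻¹) * (C t * S t) := by
          simp only [Matrix.mul_assoc]
      _ = S t * (C t)ᵀ * (γ t * (γ t)ᵀ)⁻¹ * C t * S t := by
          rw [Matrix.nonsing_inv_mul _ (hγinv t), Matrix.one_mul]
          simp only [Matrix.mul_assoc]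
  have hcanc : ∀ X : Matrix (Fin du) (Fin dx) ℝ, (R t)⁻¹ * (R t * X) = X := fun X => by
    rw [← Matrix.mul_assoc, Matrix.nonsing_inv_mul _ (hRinv t), Matrix.one_mul]
  have hBu : B t *ᵥ -(((R t)⁻¹ * (B t)ᵀ * Ψ t) *ᵥ z) = -((G t * Ψ t) *ᵥ z) := by
    rw [Matrix.mulVec_neg, mulVec_mulVec, hG]
    simp only [Matrix.mul_assoc]
  have hRu : (-(((R t)⁻¹ * (B t)ᵀ * Ψ t) *ᵥ z)) ⬝ᵥ (R t *ᵥ -(((R t)⁻¹ * (B t)ᵀ * Ψ t) *ᵥ z))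
      = z ⬝ᵥ ((Ψ t * (G t * Ψ t)) *ᵥ z) := by
    rw [Matrix.mulVec_neg, dotProduct_neg, neg_dotProduct, neg_neg, mulVec_mulVec, dp2_aux]
    congr 2
    rw [Matrix.transpose_mul, Matrix.transpose_mul, hRiT, Matrix.transpose_transpose,
      (hΨsymm t).eq, hG]
    simp only [Matrix.mul_assoc, hcanc]
  rw [hκtr, hRu, hBu]
  simp only [Matrix.neg_mulVec, Matrix.mulVec_neg, dotProduct_neg, neg_dotProduct,
    mulVec_add, mulVec_sub, add_mulVec, sub_mulVec, dotProduct_add, dotProduct_sub,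
    add_dotProduct, sub_dotProduct, smul_dotProduct, smul_eq_mul, mulVec_mulVec, dp2_aux,
    Matrix.transpose_mul, Matrix.transpose_sub, Matrix.transpose_transpose,
    (hΨsymm t).eq, (hΦsymm t).eq, hGT, Matrix.mul_sub, Matrix.sub_mul, Matrix.mul_assoc]
  simp only [dp_comm_aux _ z x]
  simp only [Matrix.transpose_mul, Matrix.transpose_transpose, (hΨsymm t).eq, (hΦsymm t).eq,
    hGT, Matrix.mul_assoc]
  rw [dp_comm_aux ((A t)ᵀ * Ψ t) x x, dp_comm_aux ((A t)ᵀ * Φ t) x x,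
    dp_comm_aux ((C t)ᵀ * ((L t)ᵀ * Φ t)) x x,
    dp_comm_aux ((A t)ᵀ * Φ t) z z, dp_comm_aux ((C t)ᵀ * ((L t)ᵀ * Φ t)) z z]
  simp only [Matrix.transpose_mul, Matrix.transpose_transpose, (hΨsymm t).eq, (hΦsymm t).eq,
    hGT, Matrix.mul_assoc]
  ring
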